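/- The Gosset lattice E₈, generated by the given upper triangular 8×8 matrix with diagonal (2,1,1,1,1,1,1,1/2), satisfies ψ_{E₈}(x) < ψ_Λ(x) for all x > 0, where Λ is the orthogonal lattice generated by diag(2,1,1,1,1,1,1,1/2). -/

import Mathlib

open scoped BigOperators

/-- The psi function `ψ_Λ(x) = ∑_{t ∈ Λ} exp(−x‖t‖²)` of the lattice generated by `M`. -/
noncomputable def psi {n : ℕ} (M : Matrix (Fin n) (Fin n) ℝ) (x : ℝ) : ℝ :=
  ∑' ω : Fin n → ℤ, Real.exp (-x * ∑ i, (M.mulVec (fun j => (ω j : ℝ)) i) ^ 2)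

/-- The upper triangular generator matrix of the Gosset lattice `E₈`. -/
noncomputable def E8gen : Matrix (Fin 8) (Fin 8) ℝ :=
  !![2, -1,  0,  0,  0,  0,  0, 1/2;
     0,  1, -1,  0,  0,  0,  0, 1/2;
     0,  0,  1, -1,  0,  0,  0, 1/2;
     0,  0,  0,  1, -1,  0,  0, 1/2;
     0,  0,  0,  0,  1, -1,  0, 1/2;
     0,  0,  0,  0,  0,  1, -1, 1/2;
     0,  0,  0,  0,  0,  0,  1, 1/2;
     0,  0,  0,  0,  0,  0,  0, 1/2]


section E8Proof
open Real Complex Finset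

lemma gauss_summable {a : ℝ} (ha : 0 < a) :
    Summable fun n : ℤ => Real.exp (-a * (n : ℝ) ^ 2) := by
  have key : ∀ m : ℕ, Real.exp (-a * (m : ℝ) ^ 2) ≤ Real.exp (-a) ^ m := by
    intro m
    rw [← Real.exp_nat_mul]
    apply Real.exp_le_exp.2
    have h1 : (m : ℝ) ≤ (m : ℝ) ^ 2 := by
      have := Nat.le_self_pow (two_ne_zero) m
      exact_mod_cast this
    nlinarith
  have hgeo : Summable fun m : ℕ => Real.exp (-a) ^ m :=
    summable_geometric_of_lt_one (Real.exp_pos _).le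
      (Real.exp_lt_one_iff.2 (neg_lt_zero.2 ha))
  apply Summable.of_nat_of_neg
  · exact Summable.of_nonneg_of_le (fun m => (Real.exp_pos _).le)
      (fun m => by exact_mod_cast key m) hgeo
  · refine Summable.of_nonneg_of_le (fun m => (Real.exp_pos _).le)
      (fun m => ?_) hgeo
    have : ((-(m : ℤ) : ℤ) : ℝ) ^ 2 = (m : ℝ) ^ 2 := by push_cast; ring
    rw [this]; exact key m

lemma gauss_shift_summable {a : ℝ} (ha : 0 < a) (c : ℝ) :
    Summable fun n : ℤ => Real.exp (-a * ((n : ℝ) + c) ^ 2) := by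
  have h := (gauss_summable (a := a / 2) (by linarith)).mul_left (Real.exp (a * c ^ 2))
  refine Summable.of_nonneg_of_le (fun n => (Real.exp_pos _).le) (fun n => ?_) h
  rw [← Real.exp_add]
  apply Real.exp_le_exp.2
  nlinarith [sq_nonneg ((n : ℝ) + 2 * c), sq_nonneg ((n:ℝ)+c)]

lemma theta_eq {x : ℝ} (hx : 0 < x) (c : ℝ) :
    ∑' n : ℤ, Real.exp (-x * ((n : ℝ) + c) ^ 2)
      = (Real.sqrt (x / π))⁻¹ *
        ∑' n : ℤ, Real.exp (-(π ^ 2 / x) * (n : ℝ) ^ 2) * Real.cos (2 * π * c * (n : ℝ)) := by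
  have hπ : (0:ℝ) < π := Real.pi_pos
  have hxπ : (0:ℝ) < x / π := div_pos hx hπ
  set a : ℂ := ((x / π : ℝ) : ℂ) with ha_def
  have ha : 0 < a.re := by simpa [a] using hxπ
  set b : ℂ := ((-(x * c) / π : ℝ) : ℂ) with hb_def
  have key := Complex.tsum_exp_neg_quadratic ha b
  -- LHS terms
  have hL : ∀ n : ℤ, Complex.exp (-π * a * n ^ 2 + 2 * π * b * n)
      = Complex.exp ((x * c ^ 2 : ℝ)) * Complex.exp ((-x * ((n : ℝ) + c) ^ 2 : ℝ)) := by
    intro n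
    rw [← Complex.exp_add]
    congr 1
    have hπC : (π : ℂ) ≠ 0 := Complex.ofReal_ne_zero.2 hπ.ne'
    push_cast [a, b]
    field_simp
    ring
  -- RHS terms
  have hR : ∀ n : ℤ, Complex.exp (-π / a * (n + Complex.I * b) ^ 2)
      = Complex.exp ((x * c ^ 2 : ℝ)) *
        (Complex.exp ((-(π ^ 2 / x) * (n : ℝ) ^ 2 : ℝ)) *
          Complex.exp (((2 * π * c * (n : ℝ) : ℝ)) * Complex.I)) := by
    intro n
    rw [← Complex.exp_add, ← Complex.exp_add]
    congr 1
    have hI2 : Complex.I ^ 2 = -1 := Complex.I_sq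
    have hπC : (π : ℂ) ≠ 0 := Complex.ofReal_ne_zero.2 hπ.ne'
    have hxC : (x : ℂ) ≠ 0 := Complex.ofReal_ne_zero.2 hx.ne'
    push_cast [a, b]
    field_simp
    ring_nf
    rw [hI2]
    ring
  simp only [hL, hR] at key
  rw [tsum_mul_left, tsum_mul_left] at key
  have hexp_ne : Complex.exp ((x * c ^ 2 : ℝ)) ≠ 0 := Complex.exp_ne_zero _
  -- a ^ (1/2 : ℂ) = sqrt (x/π)
  have hpow : a ^ (1 / 2 : ℂ) = ((Real.sqrt (x / π) : ℝ) : ℂ) := by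
    rw [ha_def, show ((1:ℂ)/2) = ((1/2 : ℝ) : ℂ) by norm_num,
      ← Complex.ofReal_cpow hxπ.le]
    norm_num [Real.sqrt_eq_rpow]
  rw [hpow] at key
  rw [mul_left_comm] at key
  have key2 := mul_left_cancel₀ hexp_ne key
  -- summability of the transformed series
  have hS : Summable fun n : ℤ => Complex.exp ((-(π ^ 2 / x) * (n : ℝ) ^ 2 : ℝ)) *
      Complex.exp (((2 * π * c * (n : ℝ) : ℝ)) * Complex.I) := by
    apply Summable.of_norm
    have hnorm : ∀ n : ℤ, ‖Complex.exp ((-(π ^ 2 / x) * (n : ℝ) ^ 2 : ℝ)) *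
        Complex.exp (((2 * π * c * (n : ℝ) : ℝ)) * Complex.I)‖
        = Real.exp (-(π ^ 2 / x) * (n : ℝ) ^ 2) := by
      intro n
      rw [norm_mul, Complex.norm_exp,
        Complex.norm_exp, Complex.ofReal_re, Complex.re_ofReal_mul, Complex.I_re,
        mul_zero, Real.exp_zero, mul_one]
    simp only [hnorm]
    exact gauss_summable (div_pos (by positivity) hx)
  -- take real parts
  have hre := congrArg Complex.re key2
  have hLre : (∑' n : ℤ, Complex.exp ((-x * ((n : ℝ) + c) ^ 2 : ℝ))).re
      = ∑' n : ℤ, Real.exp (-x * ((n : ℝ) + c) ^ 2) := by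
    simp only [← Complex.ofReal_exp, ← Complex.ofReal_tsum, Complex.ofReal_re]
  have hRre : ((1 : ℂ) / ((Real.sqrt (x / π) : ℝ) : ℂ) *
      ∑' n : ℤ, Complex.exp ((-(π ^ 2 / x) * (n : ℝ) ^ 2 : ℝ)) *
        Complex.exp (((2 * π * c * (n : ℝ) : ℝ)) * Complex.I)).re
      = (Real.sqrt (x / π))⁻¹ *
        ∑' n : ℤ, Real.exp (-(π ^ 2 / x) * (n : ℝ) ^ 2) * Real.cos (2 * π * c * (n : ℝ)) := by
    rw [one_div, ← Complex.ofReal_inv, Complex.re_ofReal_mul, Complex.re_tsum hS]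
    refine congrArg _ (tsum_congr fun n => ?_)
    rw [← Complex.ofReal_exp, Complex.re_ofReal_mul, Complex.exp_ofReal_mul_I_re]
  rw [hLre, hRre] at hre
  exact hre

lemma cos_series_summable {x : ℝ} (hx : 0 < x) (c : ℝ) :
    Summable fun n : ℤ => Real.exp (-(π ^ 2 / x) * (n : ℝ) ^ 2) * Real.cos (2 * π * c * (n : ℝ)) := by
  apply Summable.of_abs
  refine Summable.of_nonneg_of_le (fun n => abs_nonneg _) (fun n => ?_)
    (gauss_summable (a := π ^ 2 / x) (by positivity))
  rw [abs_mul, abs_of_pos (Real.exp_pos _)]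
  calc Real.exp (-(π ^ 2 / x) * (n:ℝ) ^ 2) * |Real.cos (2*π*c*(n:ℝ))|
      ≤ Real.exp (-(π ^ 2 / x) * (n:ℝ) ^ 2) * 1 := by
        exact mul_le_mul_of_nonneg_left (Real.abs_cos_le_one _) (Real.exp_pos _).le
    _ = _ := mul_one _

lemma theta_zero {x : ℝ} (hx : 0 < x) :
    ∑' n : ℤ, Real.exp (-x * (n : ℝ) ^ 2)
      = (Real.sqrt (x / π))⁻¹ * ∑' n : ℤ, Real.exp (-(π ^ 2 / x) * (n : ℝ) ^ 2) := by
  calc ∑' n : ℤ, Real.exp (-x * (n : ℝ) ^ 2)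
      = ∑' n : ℤ, Real.exp (-x * ((n : ℝ) + 0) ^ 2) := tsum_congr fun n => by norm_num
    _ = (Real.sqrt (x / π))⁻¹ *
        ∑' n : ℤ, Real.exp (-(π ^ 2 / x) * (n : ℝ) ^ 2) * Real.cos (2 * π * 0 * (n : ℝ)) :=
      theta_eq hx 0
    _ = _ := by
      refine congrArg _ (tsum_congr fun n => ?_)
      norm_num

lemma theta_le {x : ℝ} (hx : 0 < x) (c : ℝ) :
    ∑' n : ℤ, Real.exp (-x * ((n : ℝ) + c) ^ 2) ≤ ∑' n : ℤ, Real.exp (-x * (n : ℝ) ^ 2) := by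
  rw [theta_eq hx c, theta_zero hx]
  have hK : (0:ℝ) ≤ (Real.sqrt (x / π))⁻¹ := by positivity
  refine mul_le_mul_of_nonneg_left (Summable.tsum_le_tsum (fun n => ?_) (cos_series_summable hx c)
    (gauss_summable (a := π ^ 2 / x) (by positivity))) hK
  calc Real.exp (-(π ^ 2 / x) * (n:ℝ) ^ 2) * Real.cos (2*π*c*(n:ℝ))
      ≤ Real.exp (-(π ^ 2 / x) * (n:ℝ) ^ 2) * 1 :=
        mul_le_mul_of_nonneg_left (Real.cos_le_one _) (Real.exp_pos _).le
    _ = _ := mul_one _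

lemma theta_lt {x : ℝ} (hx : 0 < x) {c : ℝ} (hc : Real.cos (2 * π * c) < 1) :
    ∑' n : ℤ, Real.exp (-x * ((n : ℝ) + c) ^ 2) < ∑' n : ℤ, Real.exp (-x * (n : ℝ) ^ 2) := by
  rw [theta_eq hx c, theta_zero hx]
  have hK : (0:ℝ) < (Real.sqrt (x / π))⁻¹ := by
    have : (0:ℝ) < Real.sqrt (x / π) := Real.sqrt_pos.2 (div_pos hx Real.pi_pos)
    positivity
  refine mul_lt_mul_of_pos_left ?_ hK
  refine Summable.tsum_lt_tsum (i := (1:ℤ)) (fun n => ?_) ?_ (cos_series_summable hx c)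
    (gauss_summable (a := π ^ 2 / x) (by positivity))
  · calc Real.exp (-(π ^ 2 / x) * (n:ℝ) ^ 2) * Real.cos (2*π*c*(n:ℝ))
        ≤ Real.exp (-(π ^ 2 / x) * (n:ℝ) ^ 2) * 1 :=
          mul_le_mul_of_nonneg_left (Real.cos_le_one _) (Real.exp_pos _).le
      _ = _ := mul_one _
  · have h1 : Real.cos (2 * π * c * ((1:ℤ):ℝ)) < 1 := by norm_num [hc]
    calc Real.exp (-(π ^ 2 / x) * ((1:ℤ):ℝ) ^ 2) * Real.cos (2*π*c*((1:ℤ):ℝ))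
        < Real.exp (-(π ^ 2 / x) * ((1:ℤ):ℝ) ^ 2) * 1 :=
          mul_lt_mul_of_pos_left h1 (Real.exp_pos _)
      _ = _ := mul_one _

noncomputable def Qf {n : ℕ} (M : Matrix (Fin n) (Fin n) ℝ) (ω : Fin n → ℤ) : ℝ :=
  ∑ i, (M.mulVec (fun j => (ω j : ℝ)) i) ^ 2

lemma summable_pi_gauss : ∀ (n : ℕ) {c : ℝ}, 0 < c →
    Summable fun ω : Fin n → ℤ => ∏ j, Real.exp (-c * (ω j : ℝ) ^ 2) := by
  intro n
  induction n with
  | zero => intro c hc; exact Summable.of_finite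
  | succ n ih =>
    intro c hc
    rw [← (Fin.consEquiv fun _ : Fin (n + 1) => ℤ).summable_iff]
    have key : ∀ p : ℤ × (Fin n → ℤ),
        ((fun ω : Fin (n + 1) → ℤ => ∏ j, Real.exp (-c * (ω j : ℝ) ^ 2)) ∘
          (Fin.consEquiv fun _ => ℤ)) p
          = Real.exp (-c * (p.1 : ℝ) ^ 2) * ∏ j, Real.exp (-c * (p.2 j : ℝ) ^ 2) := by
      rintro ⟨m, w⟩
      show (∏ j, Real.exp (-c * ((Fin.cons m w : ∀ _ : Fin (n + 1), ℤ) j : ℝ) ^ 2)) = _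
      rw [Fin.prod_univ_succ, Fin.cons_zero]
      simp [Fin.cons_succ]
    exact (((gauss_summable hc).mul_of_nonneg (ih hc)
      (fun m => (Real.exp_pos _).le)
      (fun w => Finset.prod_nonneg fun j _ => (Real.exp_pos _).le)).congr
        fun p => (key p).symm)

lemma Qf_nonneg {n : ℕ} (M : Matrix (Fin n) (Fin n) ℝ) (ω : Fin n → ℤ) : 0 ≤ Qf M ω :=
  Finset.sum_nonneg fun i _ => sq_nonneg _

lemma summable_exp_Qf {n : ℕ} {M : Matrix (Fin n) (Fin n) ℝ}
    (N : Matrix (Fin n) (Fin n) ℝ) (hNM : N * M = 1) {x : ℝ} (hx : 0 < x) :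
    Summable fun ω : Fin n → ℤ => Real.exp (-x * Qf M ω) := by
  set C : ℝ := (∑ i, ∑ j, (N i j) ^ 2) + 1 with hC_def
  have hC : 0 < C := by positivity
  have key : ∀ ω : Fin n → ℤ, (∑ j, ((ω j : ℝ)) ^ 2) ≤ C * Qf M ω := by
    intro ω
    set v : Fin n → ℝ := fun j => (ω j : ℝ)
    have hv : N.mulVec (M.mulVec v) = v := by
      rw [Matrix.mulVec_mulVec, hNM, Matrix.one_mulVec]
    calc ∑ j, (v j) ^ 2 = ∑ j, (N.mulVec (M.mulVec v) j) ^ 2 := by rw [hv]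
      _ ≤ ∑ j, ((∑ i, (N j i) ^ 2) * ∑ i, (M.mulVec v i) ^ 2) := by
          refine Finset.sum_le_sum fun j _ => ?_
          simpa [Matrix.mulVec, dotProduct] using
            Finset.sum_mul_sq_le_sq_mul_sq Finset.univ (fun i => N j i) (fun i => M.mulVec v i)
      _ = (∑ j, ∑ i, (N j i) ^ 2) * Qf M ω := by rw [← Finset.sum_mul]; rfl
      _ ≤ C * Qf M ω := by
          refine mul_le_mul_of_nonneg_right ?_ (Qf_nonneg M ω)
          rw [hC_def]; linarith
  refine Summable.of_nonneg_of_le (fun ω => (Real.exp_pos _).le) (fun ω => ?_)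
    ((summable_pi_gauss n (c := x / C) (by positivity)))
  have h1 : Real.exp (-x * Qf M ω) ≤ Real.exp (-(x / C) * ∑ j, ((ω j : ℝ)) ^ 2) := by
    apply Real.exp_le_exp.2
    have := mul_le_mul_of_nonneg_left (key ω) (le_of_lt (div_pos hx hC))
    have h2 : x / C * (C * Qf M ω) = x * Qf M ω := by field_simp
    rw [h2] at this
    linarith
  refine h1.trans (le_of_eq ?_)
  rw [Finset.mul_sum, Real.exp_sum]

lemma psi_eq {n : ℕ} (M : Matrix (Fin n) (Fin n) ℝ) (x : ℝ) :
    psi M x = ∑' ω : Fin n → ℤ, Real.exp (-x * Qf M ω) := rfl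

variable {n : ℕ}

/-- the vector with `m` in slot `k` and `w` elsewhere -/
noncomputable def ωv (k : Fin n) (w : {j : Fin n // j ≠ k} → ℤ) (m : ℤ) : Fin n → ℤ :=
  (Equiv.piSplitAt k fun _ => ℤ).symm (m, w)

lemma ωv_at_k (k : Fin n) (w : {j : Fin n // j ≠ k} → ℤ) (m : ℤ) : ωv k w m k = m := by
  simp [ωv]

lemma ωv_ne (k : Fin n) (w : {j : Fin n // j ≠ k} → ℤ) (m : ℤ) {j : Fin n} (hj : j ≠ k) :
    ωv k w m j = w ⟨j, hj⟩ := by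
  simp [ωv, hj]

noncomputable def Cc (M : Matrix (Fin n) (Fin n) ℝ) (k : Fin n)
    (w : {j : Fin n // j ≠ k} → ℤ) : ℝ :=
  ∑ j, M k j * ((ωv k w 0) j : ℝ)

noncomputable def Rr (M : Matrix (Fin n) (Fin n) ℝ) (k : Fin n)
    (w : {j : Fin n // j ≠ k} → ℤ) : ℝ :=
  ∑ i ∈ Finset.univ.erase k, (M.mulVec (fun j => ((ωv k w 0) j : ℝ)) i) ^ 2

lemma mulVec_ωv_ne (M : Matrix (Fin n) (Fin n) ℝ) (k : Fin n)
    (hcol : ∀ i, i ≠ k → M i k = 0) (w : {j : Fin n // j ≠ k} → ℤ) (m : ℤ)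
    {i : Fin n} (hi : i ≠ k) :
    M.mulVec (fun j => ((ωv k w m) j : ℝ)) i = M.mulVec (fun j => ((ωv k w 0) j : ℝ)) i := by
  simp only [Matrix.mulVec, dotProduct]
  refine Finset.sum_congr rfl fun j _ => ?_
  by_cases hj : j = k
  · subst hj; rw [hcol i hi]; ring
  · rw [ωv_ne k w m hj, ωv_ne k w 0 hj]

lemma mulVec_ωv_k (M : Matrix (Fin n) (Fin n) ℝ) (k : Fin n)
    (w : {j : Fin n // j ≠ k} → ℤ) (m : ℤ) :
    M.mulVec (fun j => ((ωv k w m) j : ℝ)) k = M k k * m + Cc M k w := by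
  simp only [Matrix.mulVec, dotProduct, Cc]
  have : ∀ j : Fin n, M k j * ((ωv k w m) j : ℝ)
      = (if j = k then M k k * (m : ℝ) else 0) + M k j * ((ωv k w 0) j : ℝ) := by
    intro j
    by_cases hj : j = k
    · subst hj; rw [ωv_at_k, ωv_at_k]; simp
    · rw [ωv_ne k w m hj, ωv_ne k w 0 hj]; simp [hj]
  rw [Finset.sum_congr rfl fun j _ => this j, Finset.sum_add_distrib,
    Finset.sum_ite_eq' Finset.univ k fun _ => M k k * (m : ℝ)]
  simp

lemma Qf_ωv (M : Matrix (Fin n) (Fin n) ℝ) (k : Fin n)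
    (hcol : ∀ i, i ≠ k → M i k = 0) (w : {j : Fin n // j ≠ k} → ℤ) (m : ℤ) :
    Qf M (ωv k w m) = (M k k * m + Cc M k w) ^ 2 + Rr M k w := by
  rw [Qf, ← Finset.add_sum_erase _ _ (Finset.mem_univ k), mulVec_ωv_k, Rr]
  congr 1
  refine Finset.sum_congr rfl fun i hi => ?_
  rw [mulVec_ωv_ne M k hcol w m (Finset.mem_erase.1 hi).1]

lemma psi_fiber (M : Matrix (Fin n) (Fin n) ℝ) (k : Fin n)
    (hcol : ∀ i, i ≠ k → M i k = 0) {x : ℝ}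
    (hM : Summable fun ω : Fin n → ℤ => Real.exp (-x * Qf M ω)) :
    psi M x = ∑' w : {j : Fin n // j ≠ k} → ℤ,
        (Real.exp (-x * Rr M k w) *
          ∑' m : ℤ, Real.exp (-x * (M k k * m + Cc M k w) ^ 2)) ∧
      Summable (fun w : {j : Fin n // j ≠ k} → ℤ =>
        Real.exp (-x * Rr M k w) *
          ∑' m : ℤ, Real.exp (-x * (M k k * m + Cc M k w) ^ 2)) := by
  set f : (Fin n → ℤ) → ℝ := fun ω => Real.exp (-x * Qf M ω) with hf
  set E : (Fin n → ℤ) ≃ (({j : Fin n // j ≠ k} → ℤ) × ℤ) :=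
    (Equiv.piSplitAt k fun _ => ℤ).trans (Equiv.prodComm _ _) with hE
  have hEsymm : ∀ w m, E.symm (w, m) = ωv k w m := fun w m => rfl
  have hfE : Summable (f ∘ E.symm) := E.symm.summable_iff.mpr hM
  have hterm : ∀ (w : {j : Fin n // j ≠ k} → ℤ) (m : ℤ),
      f (E.symm (w, m))
        = Real.exp (-x * Rr M k w) * Real.exp (-x * (M k k * m + Cc M k w) ^ 2) := by
    intro w m
    rw [hEsymm, hf]
    simp only
    rw [Qf_ωv M k hcol w m, ← Real.exp_add]
    congr 1
    ring
  constructor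
  · rw [psi_eq, ← E.symm.tsum_eq f]
    rw [show (fun p : (({j : Fin n // j ≠ k} → ℤ) × ℤ) => f (E.symm p)) = f ∘ E.symm from rfl]
    rw [Summable.tsum_prod hfE]
    refine tsum_congr fun w => ?_
    rw [show (fun m : ℤ => (f ∘ E.symm) (w, m)) = fun m => f (E.symm (w, m)) from rfl]
    simp only [hterm]
    rw [tsum_mul_left]
  · have := hfE.prod
    refine this.congr fun w => ?_
    simp only [Function.comp_apply, hterm]
    rw [tsum_mul_left]

lemma inner_shift {x d C : ℝ} (hd : d ≠ 0) :
    ∀ m : ℤ, -x * (d * m + C) ^ 2 = -(x * d ^ 2) * ((m : ℝ) + C / d) ^ 2 := by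
  intro m; field_simp

lemma inner_le {x d C : ℝ} (hx : 0 < x) (hd : d ≠ 0) :
    ∑' m : ℤ, Real.exp (-x * (d * m + C) ^ 2)
      ≤ ∑' m : ℤ, Real.exp (-x * (d * m + 0) ^ 2) := by
  have hxd : 0 < x * d ^ 2 := by positivity
  calc ∑' m : ℤ, Real.exp (-x * (d * m + C) ^ 2)
      = ∑' m : ℤ, Real.exp (-(x * d ^ 2) * ((m : ℝ) + C / d) ^ 2) :=
        tsum_congr fun m => by rw [inner_shift hd]
    _ ≤ ∑' m : ℤ, Real.exp (-(x * d ^ 2) * (m : ℝ) ^ 2) := theta_le hxd _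
    _ = _ := tsum_congr fun m => by rw [show -x * (d * m + 0) ^ 2 = -(x * d^2) * (m:ℝ)^2 by ring]

lemma inner_lt {x d C : ℝ} (hx : 0 < x) (hd : d ≠ 0)
    (hc : Real.cos (2 * π * (C / d)) < 1) :
    ∑' m : ℤ, Real.exp (-x * (d * m + C) ^ 2)
      < ∑' m : ℤ, Real.exp (-x * (d * m + 0) ^ 2) := by
  have hxd : 0 < x * d ^ 2 := by positivity
  calc ∑' m : ℤ, Real.exp (-x * (d * m + C) ^ 2)
      = ∑' m : ℤ, Real.exp (-(x * d ^ 2) * ((m : ℝ) + C / d) ^ 2) :=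
        tsum_congr fun m => by rw [inner_shift hd]
    _ < ∑' m : ℤ, Real.exp (-(x * d ^ 2) * (m : ℝ) ^ 2) := theta_lt hxd hc
    _ = _ := tsum_congr fun m => by rw [show -x * (d * m + 0) ^ 2 = -(x * d^2) * (m:ℝ)^2 by ring]

section Step
variable (A B : Matrix (Fin n) (Fin n) ℝ) (k : Fin n)

lemma Rr_eq (hrows : ∀ i, i ≠ k → ∀ j, A i j = B i j) (w : {j : Fin n // j ≠ k} → ℤ) :
    Rr A k w = Rr B k w := by
  refine Finset.sum_congr rfl fun i hi => ?_
  have hik := (Finset.mem_erase.1 hi).1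
  simp only [Matrix.mulVec, dotProduct]
  refine congrArg (· ^ 2) (Finset.sum_congr rfl fun j _ => ?_)
  rw [hrows i hik j]

lemma Cc_B (hBk : ∀ j, j ≠ k → B k j = 0) (w : {j : Fin n // j ≠ k} → ℤ) :
    Cc B k w = 0 := by
  refine Finset.sum_eq_zero fun j _ => ?_
  by_cases hj : j = k
  · subst hj; rw [ωv_at_k]; simp
  · rw [hBk j hj]; ring

variable {A B k} in
lemma step_hyps (hrows : ∀ i, i ≠ k → ∀ j, A i j = B i j)
    (hcolA : ∀ i, i ≠ k → A i k = 0) : ∀ i, i ≠ k → B i k = 0 :=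
  fun i hi => (hrows i hi k) ▸ hcolA i hi

lemma step_le {x : ℝ} (hx : 0 < x)
    (hrows : ∀ i, i ≠ k → ∀ j, A i j = B i j)
    (hcolA : ∀ i, i ≠ k → A i k = 0)
    (hBkk : B k k = A k k)
    (hBk : ∀ j, j ≠ k → B k j = 0)
    (hd : A k k ≠ 0)
    (hA : Summable fun ω : Fin n → ℤ => Real.exp (-x * Qf A ω))
    (hB : Summable fun ω : Fin n → ℤ => Real.exp (-x * Qf B ω)) :
    psi A x ≤ psi B x := by
  obtain ⟨hAeq, hAsum⟩ := psi_fiber A k hcolA hA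
  obtain ⟨hBeq, hBsum⟩ := psi_fiber B k (step_hyps hrows hcolA) hB
  rw [hAeq, hBeq]
  refine Summable.tsum_le_tsum (fun w => ?_) hAsum hBsum
  rw [Rr_eq A B k hrows w, Cc_B B k hBk w, hBkk]
  exact mul_le_mul_of_nonneg_left (inner_le hx hd) (Real.exp_pos _).le

lemma step_lt {x : ℝ} (hx : 0 < x)
    (hrows : ∀ i, i ≠ k → ∀ j, A i j = B i j)
    (hcolA : ∀ i, i ≠ k → A i k = 0)
    (hBkk : B k k = A k k)
    (hBk : ∀ j, j ≠ k → B k j = 0)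
    (hd : A k k ≠ 0)
    (hA : Summable fun ω : Fin n → ℤ => Real.exp (-x * Qf A ω))
    (hB : Summable fun ω : Fin n → ℤ => Real.exp (-x * Qf B ω))
    (w₀ : {j : Fin n // j ≠ k} → ℤ)
    (hw₀ : Real.cos (2 * π * (Cc A k w₀ / A k k)) < 1) :
    psi A x < psi B x := by
  obtain ⟨hAeq, hAsum⟩ := psi_fiber A k hcolA hA
  obtain ⟨hBeq, hBsum⟩ := psi_fiber B k (step_hyps hrows hcolA) hB
  rw [hAeq, hBeq]
  refine Summable.tsum_lt_tsum (i := w₀) (fun w => ?_) ?_ hAsum hBsum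
  · rw [Rr_eq A B k hrows w, Cc_B B k hBk w, hBkk]
    exact mul_le_mul_of_nonneg_left (inner_le hx hd) (Real.exp_pos _).le
  · rw [Rr_eq A B k hrows w₀, Cc_B B k hBk w₀, hBkk]
    exact mul_lt_mul_of_pos_left (inner_lt hx hd hw₀) (Real.exp_pos _)

end Step

-- concrete part
noncomputable def dv : Fin 8 → ℝ := ![2, 1, 1, 1, 1, 1, 1, 1/2]

noncomputable def Mk (k : ℕ) : Matrix (Fin 8) (Fin 8) ℝ :=
  Matrix.of fun i j => if (i : ℕ) < k then Matrix.diagonal dv i j else E8gen i j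

lemma E8lower : ∀ i j : Fin 8, (j : ℕ) < (i : ℕ) → E8gen i j = 0 := by
  intro i j h
  fin_cases i <;> fin_cases j <;> first | rfl | norm_num at h

lemma E8diag : ∀ i : Fin 8, E8gen i i = dv i := by
  intro i; fin_cases i <;> rfl

lemma dv_ne : ∀ i : Fin 8, dv i ≠ 0 := by
  intro i
  fin_cases i <;>
    first
      | (show (2:ℝ) ≠ 0; norm_num)
      | (show (1:ℝ) ≠ 0; norm_num)
      | (show (1/2:ℝ) ≠ 0; norm_num)

lemma E8row7 : ∀ j : Fin 8, E8gen 7 j = Matrix.diagonal dv 7 j := by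
  intro j; fin_cases j <;> rfl

lemma Mk_lower (k : ℕ) : ∀ i j : Fin 8, (j : ℕ) < (i : ℕ) → Mk k i j = 0 := by
  intro i j h
  have hij : i ≠ j := fun hij => by subst hij; omega
  rw [Mk]
  by_cases hk : (i : ℕ) < k
  · simp [hk, Matrix.diagonal_apply_ne _ hij]
  · simp [hk, E8lower i j h]

lemma Mk_diag (k : ℕ) : ∀ i : Fin 8, Mk k i i = dv i := by
  intro i
  rw [Mk]
  by_cases hk : (i : ℕ) < k
  · simp [hk]
  · simp [hk, E8diag i]

lemma Mk_det (k : ℕ) : (Mk k).det = 1 := by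
  have hbt : (Mk k).BlockTriangular id := by
    intro i j hij
    exact Mk_lower k i j hij
  rw [Matrix.det_of_upperTriangular hbt]
  calc ∏ i, Mk k i i = ∏ i, dv i := Finset.prod_congr rfl fun i _ => Mk_diag k i
    _ = 1 := by
        rw [Fin.prod_univ_eight]
        show (2:ℝ) * 1 * 1 * 1 * 1 * 1 * 1 * (1/2) = 1
        norm_num

lemma Mk_summable (k : ℕ) {x : ℝ} (hx : 0 < x) :
    Summable fun ω : Fin 8 → ℤ => Real.exp (-x * Qf (Mk k) ω) := by
  refine summable_exp_Qf (Mk k)⁻¹ (Matrix.nonsing_inv_mul _ ?_) hx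
  rw [Mk_det]; exact isUnit_one

lemma Mk0 : Mk 0 = E8gen := by
  ext i j; simp [Mk]

lemma Mk7 : Mk 7 = Matrix.diagonal dv := by
  ext i j
  by_cases h : (i : ℕ) < 7
  · simp [Mk, h]
  · have h7 : i = 7 := by
      have := i.isLt; apply Fin.ext; omega
    subst h7
    simp only [Mk, Matrix.of_apply, if_neg h]
    exact E8row7 j

lemma Mk_step {k : ℕ} (hk : k < 7) {x : ℝ} (hx : 0 < x) :
    psi (Mk k) x ≤ psi (Mk (k + 1)) x := by
  set κ : Fin 8 := ⟨k, by omega⟩ with hκ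
  have hvk : (κ : ℕ) = k := rfl
  refine step_le (Mk k) (Mk (k + 1)) κ hx ?_ ?_ ?_ ?_ ?_ (Mk_summable k hx)
    (Mk_summable (k + 1) hx)
  · intro i hi j
    have hik : (i : ℕ) ≠ k := fun h => hi (Fin.ext (by omega))
    simp only [Mk, Matrix.of_apply]
    by_cases h : (i : ℕ) < k
    · rw [if_pos h, if_pos (by omega)]
    · rw [if_neg h, if_neg (by omega)]
  · intro i hi
    have hik : (i : ℕ) ≠ k := fun h => hi (Fin.ext (by omega))
    simp only [Mk, Matrix.of_apply]
    by_cases h : (i : ℕ) < k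
    · rw [if_pos h]; exact Matrix.diagonal_apply_ne dv hi
    · rw [if_neg h]; exact E8lower i κ (by omega)
  · simp only [Mk, Matrix.of_apply]
    rw [if_pos (by omega), if_neg (by omega), Matrix.diagonal_apply_eq, E8diag]
  · intro j hj
    simp only [Mk, Matrix.of_apply]
    rw [if_pos (by omega)]
    exact Matrix.diagonal_apply_ne' dv hj
  · rw [Mk_diag]; exact dv_ne κ

lemma first_step {x : ℝ} (hx : 0 < x) : psi E8gen x < psi (Mk 1) x := by
  have hE8sum : Summable fun ω : Fin 8 → ℤ => Real.exp (-x * Qf E8gen ω) := by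
    have := Mk_summable 0 hx; rwa [Mk0] at this
  set w₀ : {j : Fin 8 // j ≠ (0 : Fin 8)} → ℤ := fun p => if (p : Fin 8) = 7 then 1 else 0
    with hw₀def
  refine step_lt E8gen (Mk 1) 0 hx ?_ ?_ ?_ ?_ ?_ hE8sum (Mk_summable 1 hx) w₀ ?_
  · intro i hi j
    have hik : (i : ℕ) ≠ 0 := fun h => hi (Fin.ext (by omega))
    simp only [Mk, Matrix.of_apply]
    rw [if_neg (by omega)]
  · intro i hi
    have hik : (i : ℕ) ≠ 0 := fun h => hi (Fin.ext (by omega))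
    exact E8lower i 0 (by omega)
  · show Mk 1 0 0 = E8gen 0 0
    rfl
  · intro j hj
    show Mk 1 0 j = 0
    simp only [Mk, Matrix.of_apply]
    rw [if_pos (by norm_num)]
    exact Matrix.diagonal_apply_ne' dv hj
  · show E8gen 0 0 ≠ 0
    rw [show E8gen 0 0 = 2 from rfl]; norm_num
  · -- strictness: Cc E8gen 0 w₀ = 1/2, E8gen 0 0 = 2
    have hCc : Cc E8gen 0 w₀ = 1 / 2 := by
      rw [Cc]
      have h1 : ∀ j : Fin 8, E8gen 0 j * (((ωv 0 w₀ 0) j : ℤ) : ℝ)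
          = if j = (7 : Fin 8) then (1/2 : ℝ) else 0 := by
        intro j
        by_cases h7 : j = 7
        · subst h7
          have hval : (ωv 0 w₀ 0) (7 : Fin 8) = 1 := by
            rw [ωv_ne 0 w₀ 0 (show (7 : Fin 8) ≠ 0 by decide)]
            rfl
          rw [hval, if_pos rfl]
          show E8gen 0 7 * ((1 : ℤ) : ℝ) = 1/2
          rw [show E8gen 0 7 = 1/2 from rfl]
          norm_num
        · have hval : (ωv 0 w₀ 0) j = 0 := by
            by_cases h0 : j = 0
            · subst h0; exact ωv_at_k 0 w₀ 0
            · rw [ωv_ne 0 w₀ 0 h0, hw₀def]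
              simp [h7]
          rw [hval, if_neg h7]
          norm_num
      rw [Finset.sum_congr rfl fun j _ => h1 j,
        Finset.sum_ite_eq' Finset.univ (7 : Fin 8) fun _ => (1/2 : ℝ)]
      simp
    rw [hCc, show E8gen 0 0 = 2 from rfl]
    rw [show 2 * π * (1 / 2 / 2) = π / 2 by ring, Real.cos_pi_div_two]
    norm_num

/-- The Gosset lattice `E₈`, a skewing of the orthogonal lattice generated by
`diag(2,1,1,1,1,1,1,1/2)`, has a strictly smaller psi function. -/
theorem psi_E8_lt_orthogonal (x : ℝ) (hx : 0 < x) :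
    psi E8gen x < psi (Matrix.diagonal ![2, 1, 1, 1, 1, 1, 1, 1/2]) x := by
  have hdv : Matrix.diagonal ![2, 1, 1, 1, 1, 1, 1, 1/2] = Mk 7 := by rw [Mk7]; rfl
  rw [hdv]
  calc psi E8gen x < psi (Mk 1) x := first_step hx
    _ ≤ psi (Mk 2) x := Mk_step (by norm_num) hx
    _ ≤ psi (Mk 3) x := Mk_step (by norm_num) hx
    _ ≤ psi (Mk 4) x := Mk_step (by norm_num) hx
    _ ≤ psi (Mk 5) x := Mk_step (by norm_num) hx
    _ ≤ psi (Mk 6) x := Mk_step (by norm_num) hx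
    _ ≤ psi (Mk 7) x := Mk_step (by norm_num) hx

end E8Proof
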